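/- (Güler's lemma) Let H be a real Hilbert space, f : H → ℝ, let λ_n > 0 (n ≥ 1) be stepsizes with σ_n = λ_1 + ⋯ + λ_n, and let (x_n)_{n≥0} be a sequence in H such that for every n ≥ 1 and every z ∈ H, f(z) ≥ f(x_n) + ⟨(x_{n−1} − x_n)/λ_n, z − x_n⟩ (i.e., (x_{n−1} − x_n)/λ_n is a subgradient of f at x_n, so (x_n) is a proximal sequence for ∂f). Then for every u ∈ H and every n ≥ 1: f(x_n) − f(u) ≤ ‖u − x_0‖²/(2σ_n) − ‖u − x_n‖²/(2σ_n) − (σ_n/2)‖y_n‖², where y_n = (x_n − x_{n−1})/λ_n. -/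

import Mathlib

open RealInnerProductSpace Finset

/-- Güler's lemma: for a proximal sequence `(x_n)` for `∂f`, i.e. with
`(x_{n−1} − x_n)/λ_n` a subgradient of `f` at `x_n`, one has, with `σ_n = λ_1 + ⋯ + λ_n`
and `y_n = (x_n − x_{n−1})/λ_n`,
`f(x_n) − f(u) ≤ ‖u − x_0‖²/(2σ_n) − ‖u − x_n‖²/(2σ_n) − (σ_n/2)‖y_n‖²`. -/
theorem stmt10 {H : Type*} [NormedAddCommGroup H] [InnerProductSpace ℝ H] [CompleteSpace H]
    (f : H → ℝ) (lam : ℕ → ℝ) (hlam : ∀ n : ℕ, 1 ≤ n → 0 < lam n)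
    (x : ℕ → H)
    (hsub : ∀ n : ℕ, 1 ≤ n → ∀ z : H,
      f (x n) + ⟪(lam n)⁻¹ • (x (n - 1) - x n), z - x n⟫ ≤ f z) :
    ∀ (u : H) (n : ℕ), 1 ≤ n →
      f (x n) - f u ≤
        ‖u - x 0‖ ^ 2 / (2 * ∑ i ∈ range n, lam (i + 1)) -
          ‖u - x n‖ ^ 2 / (2 * ∑ i ∈ range n, lam (i + 1)) -
          ((∑ i ∈ range n, lam (i + 1)) / 2) * ‖(lam n)⁻¹ • (x n - x (n - 1))‖ ^ 2 := by
  intro u n hn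
  obtain ⟨σ, hσdef⟩ : ∃ σ : ℕ → ℝ, ∀ m, σ m = ∑ i ∈ range m, lam (i + 1) :=
    ⟨_, fun _ => rfl⟩
  obtain ⟨p, hp⟩ : ∃ p : ℕ → H, ∀ k, p k = (lam k)⁻¹ • (x (k - 1) - x k) :=
    ⟨_, fun _ => rfl⟩
  -- positivity of sigma
  have hσpos : ∀ m : ℕ, 1 ≤ m → 0 < σ m := by
    intro m hm
    rw [hσdef]
    apply Finset.sum_pos
    · intro i _
      exact hlam (i + 1) (Nat.le_add_left 1 i)
    · exact Finset.nonempty_range_iff.mpr (by omega)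
  have hσs : ∀ k : ℕ, σ (k + 1) = σ k + lam (k + 1) := by
    intro k
    rw [hσdef, hσdef, Finset.sum_range_succ]
  -- the inner product identity (polarization)
  have hinner : ∀ a b c : H, ⟪a - b, b - c⟫ =
      (‖c - a‖ ^ 2 - ‖c - b‖ ^ 2 - ‖b - a‖ ^ 2) / 2 := by
    intro a b c
    have h1 : ‖c - a‖ ^ 2 = ‖(c - b) + (b - a)‖ ^ 2 := by rw [sub_add_sub_cancel]
    rw [norm_add_sq_real] at h1
    have h2 : ⟪a - b, b - c⟫ = ⟪c - b, b - a⟫ := by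
      rw [real_inner_comm, ← inner_neg_neg (𝕜 := ℝ)]
      congr 1 <;> abel
    rw [h2]; linarith
  -- x (k-1) - x k = lam k • p k
  have hxp : ∀ k : ℕ, 1 ≤ k → x (k - 1) - x k = lam k • p k := by
    intro k hk
    rw [hp, smul_smul, mul_inv_cancel₀ (hlam k hk).ne', one_smul]
  -- subgradient inequality in terms of p
  have hsub' : ∀ k : ℕ, 1 ≤ k → ∀ z : H, f (x k) + ⟪p k, z - x k⟫ ≤ f z := by
    intro k hk z
    rw [hp]
    exact hsub k hk z
  -- step inequality from the subgradient property
  have hstep : ∀ k : ℕ, 1 ≤ k → ∀ z : H,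
      lam k * (f (x k) - f z) ≤ ⟪x (k - 1) - x k, x k - z⟫ := by
    intro k hk z
    have h := hsub k hk z
    rw [real_inner_smul_left] at h
    have hflip : ⟪x (k - 1) - x k, z - x k⟫ = -⟪x (k - 1) - x k, x k - z⟫ := by
      rw [← inner_neg_right]; congr 1; abel
    rw [hflip] at h
    have hk' := hlam k hk
    have h' : f (x k) - f z ≤ (lam k)⁻¹ * ⟪x (k - 1) - x k, x k - z⟫ := by linarith
    calc lam k * (f (x k) - f z)
        ≤ lam k * ((lam k)⁻¹ * ⟪x (k - 1) - x k, x k - z⟫) :=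
          mul_le_mul_of_nonneg_left h' hk'.le
      _ = ⟪x (k - 1) - x k, x k - z⟫ := by field_simp
  have hnormp : ∀ k : ℕ, 1 ≤ k → ‖x k - x (k - 1)‖ = lam k * ‖p k‖ := by
    intro k hk
    rw [norm_sub_rev, hxp k hk, norm_smul, Real.norm_eq_abs, abs_of_pos (hlam k hk)]
  -- monotonicity of subgradient norms
  have hmono : ∀ k : ℕ, 1 ≤ k → ‖p (k + 1)‖ ≤ ‖p k‖ := by
    intro k hk
    have g1 := hsub' k hk (x (k + 1))
    have g2 := hsub' (k + 1) (by omega) (x k)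
    have hk1 := hlam (k + 1) (by omega)
    have e2 : x k - x (k + 1) = lam (k + 1) • p (k + 1) := by
      have h := hxp (k + 1) (by omega)
      simpa using h
    have i1 : ⟪p k, x (k + 1) - x k⟫ = -(lam (k + 1) * ⟪p k, p (k + 1)⟫) := by
      rw [show x (k + 1) - x k = -(x k - x (k + 1)) by abel, e2, inner_neg_right,
        real_inner_smul_right]
    have i2 : ⟪p (k + 1), x k - x (k + 1)⟫ = lam (k + 1) * ‖p (k + 1)‖ ^ 2 := by
      rw [e2, real_inner_smul_right, real_inner_self_eq_norm_sq]
    rw [i1] at g1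
    rw [i2] at g2
    -- adding g1, g2 : lam (k+1) * (‖p (k+1)‖^2 - ⟪p k, p (k+1)⟫) ≤ 0
    have hip : ‖p (k + 1)‖ ^ 2 ≤ ⟪p k, p (k + 1)⟫ := by nlinarith
    have hcs := real_inner_le_norm (p k) (p (k + 1))
    nlinarith [norm_nonneg (p (k + 1)), norm_nonneg (p k)]
  -- descent inequality
  have hdec : ∀ k : ℕ, 1 ≤ k → f (x (k + 1)) + lam (k + 1) * ‖p (k + 1)‖ ^ 2 ≤ f (x k) := by
    intro k hk
    have g2 := hsub' (k + 1) (by omega) (x k)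
    have e2 : x k - x (k + 1) = lam (k + 1) • p (k + 1) := by
      have h := hxp (k + 1) (by omega)
      simpa using h
    have i2 : ⟪p (k + 1), x k - x (k + 1)⟫ = lam (k + 1) * ‖p (k + 1)‖ ^ 2 := by
      rw [e2, real_inner_smul_right, real_inner_self_eq_norm_sq]
    rw [i2] at g2
    linarith
  -- one-step energy estimate
  have honestep : ∀ k : ℕ, 1 ≤ k →
      lam k * (f (x k) - f u) + ‖u - x k‖ ^ 2 / 2 + (lam k) ^ 2 / 2 * ‖p k‖ ^ 2
        ≤ ‖u - x (k - 1)‖ ^ 2 / 2 := by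
    intro k hk
    have h := hstep k hk u
    rw [hinner (x (k - 1)) (x k) u] at h
    have hnp := hnormp k hk
    have hsq : ‖x k - x (k - 1)‖ ^ 2 = (lam k) ^ 2 * ‖p k‖ ^ 2 := by rw [hnp]; ring
    nlinarith
  -- key inequality by induction
  have key : ∀ m : ℕ, 1 ≤ m →
      σ m * (f (x m) - f u) + ‖u - x m‖ ^ 2 / 2 + σ m ^ 2 / 2 * ‖p m‖ ^ 2
        ≤ ‖u - x 0‖ ^ 2 / 2 := by
    intro m hm
    induction m, hm using Nat.le_induction with
    | base =>
      have h := honestep 1 le_rfl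
      have hσ1 : σ 1 = lam 1 := by rw [hσdef]; simp
      rw [hσ1]
      simpa using h
    | succ k hk ih =>
      have h1 := honestep (k + 1) (by omega)
      have hksucc : (k + 1 : ℕ) - 1 = k := by omega
      rw [hksucc] at h1
      have h2 := hdec k hk
      have h3 : ‖p (k + 1)‖ ^ 2 ≤ ‖p k‖ ^ 2 := by
        have := hmono k hk
        nlinarith [norm_nonneg (p (k + 1))]
      have hσk : (0 : ℝ) ≤ σ k := (hσpos k hk).le
      have hk1 := hlam (k + 1) (by omega)
      rw [hσs k]
      nlinarith [mul_le_mul_of_nonneg_left h3 (sq_nonneg (σ k)),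
        mul_le_mul_of_nonneg_left h2 hσk]
  -- conclude
  have hσn := hσpos n hn
  have hkey := key n hn
  have hynorm : ‖(lam n)⁻¹ • (x n - x (n - 1))‖ = ‖p n‖ := by
    rw [hp, show x n - x (n - 1) = -(x (n - 1) - x n) by abel, smul_neg, norm_neg]
  rw [hynorm, ← hσdef n]
  have goal' : f (x n) - f u ≤
      (‖u - x 0‖ ^ 2 / 2 - ‖u - x n‖ ^ 2 / 2 - σ n ^ 2 / 2 * ‖p n‖ ^ 2) / σ n := by
    rw [le_div_iff₀ hσn]
    nlinarith [hkey]
  have heq : (‖u - x 0‖ ^ 2 / 2 - ‖u - x n‖ ^ 2 / 2 - σ n ^ 2 / 2 * ‖p n‖ ^ 2) / σ n =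
      ‖u - x 0‖ ^ 2 / (2 * σ n) - ‖u - x n‖ ^ 2 / (2 * σ n) - σ n / 2 * ‖p n‖ ^ 2 := by
    field_simp
  rw [heq] at goal'
  exact goal'
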